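/- Let d ≥ 2 and let G be a closed subgroup of Aut T_d containing the standard odometer ω. Suppose G is pronilpotent. If G contains a nontrivial element g that acts trivially on the first level of T_d and whose first-level sections g|_x are trivial for all but exactly one letter x ∈ {0,…,d−1} (i.e., in wreath coordinates g = (1,…,1,h,1,…,1) with h ≠ 1), then d is a power of some prime p and G is pro-p. -/

import Mathlib

open scoped Pointwise

namespace TreeDyn

/-- Vertices of the `d`-regular rooted tree: finite words over `{0,…,d-1}`,
with the empty word as root and children of `w` the words `w ++ [x]`. -/
abbrev Vertex (d : ℕ) := List (Fin d)

/-- A function on words is length-preserving and prefix-preserving. -/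
def LP (d : ℕ) (f : Vertex d → Vertex d) : Prop :=
  (∀ w : Vertex d, (f w).length = w.length) ∧
    ∀ v w : Vertex d, v <+: w → f v <+: f w

theorem LP.id' (d : ℕ) : LP d id := ⟨fun _ => rfl, fun _ _ h => h⟩

theorem LP.comp {d : ℕ} {f g : Vertex d → Vertex d} (hf : LP d f) (hg : LP d g) :
    LP d (f ∘ g) :=
  ⟨fun w => (hf.1 (g w)).trans (hg.1 w), fun v w h => hf.2 _ _ (hg.2 _ _ h)⟩

/-- The automorphism group of the rooted `d`-regular tree, realized as the subgroup of
permutations of the vertex set which fix the root and preserve the child relation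
(equivalently: length- and prefix-preserving permutations). -/
def treeAut (d : ℕ) : Subgroup (Equiv.Perm (Vertex d)) where
  carrier := {g | LP d ⇑g ∧ LP d ⇑g⁻¹}
  one_mem' := ⟨LP.id' d, by simpa using LP.id' d⟩
  mul_mem' := by
    rintro a b ⟨ha1, ha2⟩ ⟨hb1, hb2⟩
    refine ⟨?_, ?_⟩
    · simpa [Equiv.Perm.coe_mul] using ha1.comp hb1
    · rw [mul_inv_rev]
      simpa [Equiv.Perm.coe_mul] using hb2.comp ha2
  inv_mem' := by
    rintro a ⟨h1, h2⟩
    exact ⟨h2, by simpa using h1⟩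

/-- `Aut T_d`, the automorphism group of the `d`-regular rooted tree. -/
abbrev AutT (d : ℕ) := ↥(treeAut d)

namespace AutT

variable {d : ℕ}

/-- The underlying permutation of the vertices. -/
def toPerm (g : AutT d) : Equiv.Perm (Vertex d) := g.1

theorem toPerm_mul (g h : AutT d) : (g * h).toPerm = g.toPerm * h.toPerm := rfl

theorem toPerm_inv (g : AutT d) : (g⁻¹).toPerm = (g.toPerm)⁻¹ := rfl

theorem toPerm_one : (1 : AutT d).toPerm = 1 := rfl

theorem length_apply (g : AutT d) (w : Vertex d) : (g.toPerm w).length = w.length :=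
  g.2.1.1 w

theorem prefix_apply (g : AutT d) {v w : Vertex d} (h : v <+: w) :
    g.toPerm v <+: g.toPerm w :=
  g.2.1.2 v w h

theorem take_apply (g : AutT d) (v u : Vertex d) :
    (g.toPerm (v ++ u)).take v.length = g.toPerm v := by
  have h : g.toPerm v <+: g.toPerm (v ++ u) := g.prefix_apply (List.prefix_append v u)
  have h2 := List.prefix_iff_eq_take.mp h
  rw [length_apply] at h2
  exact h2.symm

theorem apply_append (g : AutT d) (v u : Vertex d) :
    g.toPerm (v ++ u) = g.toPerm v ++ (g.toPerm (v ++ u)).drop v.length := by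
  conv_lhs => rw [← List.take_append_drop v.length (g.toPerm (v ++ u))]
  rw [take_apply]

/-- The section function: the action of `g` on the subtree over `v`, transported
to the whole tree. -/
def secFun (g : AutT d) (v : Vertex d) : Vertex d → Vertex d :=
  fun u => (g.toPerm (v ++ u)).drop v.length

theorem secFun_spec (g : AutT d) (v u : Vertex d) :
    g.toPerm (v ++ u) = g.toPerm v ++ secFun g v u :=
  apply_append g v u

theorem secFun_left (g : AutT d) (v u : Vertex d) :
    secFun g⁻¹ (g.toPerm v) (secFun g v u) = u := by
  have h1 := secFun_spec g⁻¹ (g.toPerm v) (secFun g v u)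
  rw [← secFun_spec g v u] at h1
  rw [toPerm_inv] at h1
  simp only [Equiv.Perm.inv_def, Equiv.symm_apply_apply] at h1
  exact (List.append_cancel_left h1).symm

theorem LP_secFun (g : AutT d) (v : Vertex d) : LP d (secFun g v) := by
  constructor
  · intro w
    simp only [secFun, List.length_drop, length_apply, List.length_append]
    omega
  · intro u1 u2 h
    have h2 : g.toPerm (v ++ u1) <+: g.toPerm (v ++ u2) := by
      refine g.prefix_apply ?_
      obtain ⟨t, ht⟩ := h
      exact ⟨t, by rw [List.append_assoc, ht]⟩
    exact h2.drop v.length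

/-- The section of the tree automorphism `g` at the vertex `v`: the automorphism `g|_v` with
`g (v ++ u) = g v ++ g|_v u`. -/
def sec (g : AutT d) (v : Vertex d) : AutT d :=
  ⟨{ toFun := secFun g v
     invFun := secFun g⁻¹ (g.toPerm v)
     left_inv := secFun_left g v
     right_inv := by
       intro u
       have h := secFun_left g⁻¹ (g.toPerm v) u
       rw [inv_inv] at h
       rw [toPerm_inv] at h
       simp only [Equiv.Perm.inv_def, Equiv.symm_apply_apply] at h
       exact h },
   by
     refine ⟨LP_secFun g v, ?_⟩
     have : ⇑(({ toFun := secFun g v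
                 invFun := secFun g⁻¹ (g.toPerm v)
                 left_inv := secFun_left g v
                 right_inv := by
                   intro u
                   have h := secFun_left g⁻¹ (g.toPerm v) u
                   rw [inv_inv] at h
                   rw [toPerm_inv] at h
                   simp only [Equiv.Perm.inv_def, Equiv.symm_apply_apply] at h
                   exact h } : Equiv.Perm (Vertex d))⁻¹) = secFun g⁻¹ (g.toPerm v) := rfl
     rw [this]
     exact LP_secFun g⁻¹ (g.toPerm v)⟩

theorem sec_apply (g : AutT d) (v u : Vertex d) :
    (sec g v).toPerm u = (g.toPerm (v ++ u)).drop v.length := rfl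

end AutT

open AutT

/-- The stabilizer of the vertex `v` in `Aut T_d`. -/
def stabT (d : ℕ) (v : Vertex d) : Subgroup (AutT d) where
  carrier := {g | g.toPerm v = v}
  one_mem' := rfl
  mul_mem' := by
    intro a b ha hb
    show (a * b).toPerm v = v
    rw [toPerm_mul, Equiv.Perm.mul_apply]
    rw [show b.toPerm v = v from hb, show a.toPerm v = v from ha]
  inv_mem' := by
    intro a ha
    show (a⁻¹).toPerm v = v
    rw [toPerm_inv]
    rw [Equiv.Perm.inv_eq_iff_eq]
    exact (show a.toPerm v = v from ha).symm

/-- The self-similarity homomorphism `π_v` from the stabilizer of `v` to `Aut T_d`,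
`g ↦ g|_v`. -/
def secHom (d : ℕ) (v : Vertex d) : (stabT d v) →* AutT d where
  toFun g := sec g.1 v
  map_one' := by
    apply Subtype.ext
    apply Equiv.ext
    intro u
    show ((1 : AutT d).toPerm (v ++ u)).drop v.length = (1 : AutT d).toPerm u
    rw [toPerm_one]
    simp [List.drop_left]
  map_mul' := by
    intro a b
    apply Subtype.ext
    apply Equiv.ext
    intro u
    have hb : (b.1).toPerm v = v := b.2
    show ((a.1 * b.1).toPerm (v ++ u)).drop v.length
        = (sec a.1 v).toPerm ((sec b.1 v).toPerm u)
    rw [toPerm_mul, Equiv.Perm.mul_apply]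
    congr 1
    congr 1
    have h := secFun_spec b.1 v u
    rw [hb] at h
    exact h

/-- The image subgroup `H^v = π_v(H_v)` of the stabilizer of `v` in `H` under the
self-similarity map. -/
def secSG (d : ℕ) (H : Subgroup (AutT d)) (v : Vertex d) : Subgroup (AutT d) :=
  (H.subgroupOf (stabT d v)).map (secHom d v)

/-- A subgroup of `Aut T_d` is self-similar if `H^v ≤ H` for every vertex `v`. -/
def IsSelfSimilar (d : ℕ) (H : Subgroup (AutT d)) : Prop :=
  ∀ v : Vertex d, secSG d H v ≤ H

/-- A subgroup of `Aut T_d` is fractal if `H^v = H` for every vertex `v`. -/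
def IsFractal (d : ℕ) (H : Subgroup (AutT d)) : Prop :=
  ∀ v : Vertex d, secSG d H v = H

end TreeDyn
namespace TreeDyn

open AutT

variable {d : ℕ}

instance : TopologicalSpace (Vertex d) := ⊥
instance : DiscreteTopology (Vertex d) := ⟨rfl⟩

/-- The profinite topology on `Aut T_d`: the topology of pointwise convergence on vertices. -/
instance : TopologicalSpace (AutT d) :=
  TopologicalSpace.induced (fun g : AutT d => (g.toPerm : Vertex d → Vertex d)) inferInstance

theorem continuous_toFun : Continuous fun g : AutT d => (g.toPerm : Vertex d → Vertex d) :=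
  continuous_induced_dom

theorem continuous_ev (x : Vertex d) : Continuous fun g : AutT d => g.toPerm x :=
  (continuous_apply x).comp continuous_toFun

instance : IsTopologicalGroup (AutT d) where
  continuous_mul := by
    apply continuous_induced_rng.2
    show Continuous fun p : AutT d × AutT d => ((p.1 * p.2).toPerm : Vertex d → Vertex d)
    apply continuous_pi
    intro x
    rw [continuous_discrete_rng]
    intro z
    have heq : ((fun p : AutT d × AutT d => (p.1 * p.2).toPerm x)) ⁻¹' {z}
        = ⋃ y : Vertex d, ((fun p : AutT d × AutT d => p.2.toPerm x) ⁻¹' {y})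
            ∩ ((fun p : AutT d × AutT d => p.1.toPerm y) ⁻¹' {z}) := by
      ext p
      simp only [Set.mem_preimage, Set.mem_singleton_iff, Set.mem_iUnion, Set.mem_inter_iff]
      constructor
      · intro h
        exact ⟨p.2.toPerm x, rfl, by rw [toPerm_mul, Equiv.Perm.mul_apply] at h; exact h⟩
      · rintro ⟨y, h1, h2⟩
        rw [toPerm_mul, Equiv.Perm.mul_apply, h1, h2]
    rw [heq]
    apply isOpen_iUnion
    intro y
    exact ((isOpen_discrete _).preimage ((continuous_ev x).comp continuous_snd)).inter
      ((isOpen_discrete _).preimage ((continuous_ev y).comp continuous_fst))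
  continuous_inv := by
    apply continuous_induced_rng.2
    show Continuous fun g : AutT d => ((g⁻¹).toPerm : Vertex d → Vertex d)
    apply continuous_pi
    intro x
    rw [continuous_discrete_rng]
    intro z
    have heq : (fun g : AutT d => (g⁻¹).toPerm x) ⁻¹' {z}
        = (fun g : AutT d => g.toPerm z) ⁻¹' {x} := by
      ext g
      simp only [Set.mem_preimage, Set.mem_singleton_iff]
      rw [toPerm_inv]
      exact Equiv.Perm.inv_eq_iff_eq.trans eq_comm
    rw [heq]
    exact (isOpen_discrete _).preimage (continuous_ev z)

end TreeDyn
namespace TreeDyn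

open AutT

/-- `J` is the self-similar closure of `H` in `G`: the smallest closed self-similar
subgroup of `G` containing `H`. -/
def IsSelfSimilarClosure (d : ℕ) (G H J : Subgroup (AutT d)) : Prop :=
  H ≤ J ∧ J ≤ G ∧ IsClosed (J : Set (AutT d)) ∧ IsSelfSimilar d J ∧
    ∀ J' : Subgroup (AutT d), H ≤ J' → J' ≤ G → IsClosed (J' : Set (AutT d)) →
      IsSelfSimilar d J' → J ≤ J'

/-- The pointwise stabilizer in `Aut T_d` of the vertices at level `m`. -/
def levelStab (d : ℕ) (m : ℕ) : Subgroup (AutT d) where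
  carrier := {g | ∀ v : Vertex d, v.length = m → g.toPerm v = v}
  one_mem' := fun _ _ => rfl
  mul_mem' := by
    intro a b ha hb v hv
    show (a * b).toPerm v = v
    rw [toPerm_mul, Equiv.Perm.mul_apply, hb v hv, ha v hv]
  inv_mem' := by
    intro a ha v hv
    show (a⁻¹).toPerm v = v
    rw [toPerm_inv, Equiv.Perm.inv_eq_iff_eq]
    exact (ha v hv).symm

/-- A topological group is pronilpotent if its quotient by every open normal subgroup
is nilpotent. -/
def Pronilpotent (G : Type*) [Group G] [TopologicalSpace G] : Prop :=
  ∀ (N : Subgroup G) [N.Normal], IsOpen (N : Set G) → Group.IsNilpotent (G ⧸ N)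

/-- A topological group is pro-`p` if its quotient by every open normal subgroup
is a `p`-group. -/
def IsProP (p : ℕ) (G : Type*) [Group G] [TopologicalSpace G] : Prop :=
  ∀ (N : Subgroup G) [N.Normal], IsOpen (N : Set G) → IsPGroup p (G ⧸ N)

/-- A topological group is prosolvable if its quotient by every open normal subgroup
is solvable. -/
def Prosolvable (G : Type*) [Group G] [TopologicalSpace G] : Prop :=
  ∀ (N : Subgroup G) [N.Normal], IsOpen (N : Set G) → IsSolvable (G ⧸ N)

/-- The Frattini subgroup of a topological group: the intersection of its
maximal open (proper) subgroups. -/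
def frattiniOpen (G : Type*) [Group G] [TopologicalSpace G] : Subgroup G :=
  sInf {M : Subgroup G | IsOpen (M : Set G) ∧ M ≠ ⊤ ∧
    ∀ M' : Subgroup G, IsOpen (M' : Set G) → M < M' → M' = ⊤}

end TreeDyn
namespace TreeDyn

open AutT

variable {d : ℕ}

/-- The cyclic successor on `Fin d`. -/
def succFin (x : Fin d) : Fin d :=
  ⟨(x.1 + 1) % d, Nat.mod_lt _ (Nat.lt_of_le_of_lt (Nat.zero_le _) x.2)⟩

/-- The cyclic predecessor on `Fin d`. -/
def predFin (x : Fin d) : Fin d :=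
  ⟨(x.1 + (d - 1)) % d, Nat.mod_lt _ (Nat.lt_of_le_of_lt (Nat.zero_le _) x.2)⟩

theorem predFin_succFin (x : Fin d) : predFin (succFin x) = x := by
  have hd : 0 < d := Nat.lt_of_le_of_lt (Nat.zero_le _) x.2
  apply Fin.ext
  show ((x.1 + 1) % d + (d - 1)) % d = x.1
  rw [Nat.mod_add_mod, show x.1 + 1 + (d - 1) = x.1 + d by omega, Nat.add_mod_right,
    Nat.mod_eq_of_lt x.2]

theorem succFin_predFin (x : Fin d) : succFin (predFin x) = x := by
  have hd : 0 < d := Nat.lt_of_le_of_lt (Nat.zero_le _) x.2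
  apply Fin.ext
  show ((x.1 + (d - 1)) % d + 1) % d = x.1
  rw [Nat.mod_add_mod, show x.1 + (d - 1) + 1 = x.1 + d by omega, Nat.add_mod_right,
    Nat.mod_eq_of_lt x.2]

theorem succFin_val_eq_zero_iff (x : Fin d) : (succFin x).1 = 0 ↔ x.1 + 1 = d := by
  show (x.1 + 1) % d = 0 ↔ x.1 + 1 = d
  by_cases h : x.1 + 1 = d
  · simp [h, Nat.mod_self]
  · rw [Nat.mod_eq_of_lt (by omega)]
    omega

theorem predFin_val_succ_eq_iff (x : Fin d) : (predFin x).1 + 1 = d ↔ x.1 = 0 := by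
  have hd : 0 < d := Nat.lt_of_le_of_lt (Nat.zero_le _) x.2
  show (x.1 + (d - 1)) % d + 1 = d ↔ x.1 = 0
  rcases Nat.eq_zero_or_pos x.1 with h | h
  · rw [h]
    simp only [Nat.zero_add]
    rw [Nat.mod_eq_of_lt (show d - 1 < d by omega)]
    simp only [iff_true, eq_self_iff_true]
    omega
  · rw [show x.1 + (d - 1) = (x.1 - 1) + d by omega, Nat.add_mod_right,
      Nat.mod_eq_of_lt (show x.1 - 1 < d by omega)]
    omega

/-- The odometer function: adds one with carrying, on words read root-first. -/
def odF (d : ℕ) : Vertex d → Vertex d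
  | [] => []
  | x :: u => succFin x :: (if x.1 + 1 = d then odF d u else u)

/-- The inverse odometer function. -/
def odG (d : ℕ) : Vertex d → Vertex d
  | [] => []
  | x :: u => predFin x :: (if x.1 = 0 then odG d u else u)

theorem odG_odF (u : Vertex d) : odG d (odF d u) = u := by
  induction u with
  | nil => rfl
  | cons x t ih =>
    simp only [odF, odG, predFin_succFin]
    by_cases h : x.1 + 1 = d
    · rw [if_pos h, if_pos ((succFin_val_eq_zero_iff x).mpr h), ih]
    · rw [if_neg h, if_neg (fun hc => h ((succFin_val_eq_zero_iff x).mp hc))]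

theorem odF_odG (u : Vertex d) : odF d (odG d u) = u := by
  induction u with
  | nil => rfl
  | cons x t ih =>
    simp only [odF, odG, succFin_predFin]
    by_cases h : x.1 = 0
    · rw [if_pos h, if_pos ((predFin_val_succ_eq_iff x).mpr h), ih]
    · rw [if_neg h, if_neg (fun hc => h ((predFin_val_succ_eq_iff x).mp hc))]

theorem odF_append (a b : Vertex d) :
    odF d (a ++ b) = odF d a ++ (if ∀ x ∈ a, x.1 + 1 = d then odF d b else b) := by
  induction a with
  | nil => simp [odF]
  | cons x t ih =>
    by_cases h : x.1 + 1 = d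
    · by_cases h2 : ∀ y ∈ t, y.1 + 1 = d
      · have hall : ∀ y ∈ x :: t, y.1 + 1 = d := by
          intro y hy
          rcases List.mem_cons.mp hy with rfl | hy
          · exact h
          · exact h2 y hy
        simp only [List.cons_append, List.append_eq, odF, if_pos h, if_pos h2, if_pos hall, ih]
      · have hall : ¬ ∀ y ∈ x :: t, y.1 + 1 = d :=
          fun hc => h2 fun y hy => hc y (List.mem_cons_of_mem x hy)
        simp only [List.cons_append, List.append_eq, odF, if_pos h, if_neg h2, if_neg hall, ih]
    · have hall : ¬ ∀ y ∈ x :: t, y.1 + 1 = d :=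
        fun hc => h (hc x List.mem_cons_self)
      simp only [List.cons_append, List.append_eq, odF, if_neg h, if_neg hall]

theorem odG_append (a b : Vertex d) :
    odG d (a ++ b) = odG d a ++ (if ∀ x ∈ a, x.1 = 0 then odG d b else b) := by
  induction a with
  | nil => simp [odG]
  | cons x t ih =>
    by_cases h : x.1 = 0
    · by_cases h2 : ∀ y ∈ t, y.1 = 0
      · have hall : ∀ y ∈ x :: t, y.1 = 0 := by
          intro y hy
          rcases List.mem_cons.mp hy with rfl | hy
          · exact h
          · exact h2 y hy
        simp only [List.cons_append, List.append_eq, odG, if_pos h, if_pos h2, if_pos hall, ih]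
      · have hall : ¬ ∀ y ∈ x :: t, y.1 = 0 :=
          fun hc => h2 fun y hy => hc y (List.mem_cons_of_mem x hy)
        simp only [List.cons_append, List.append_eq, odG, if_pos h, if_neg h2, if_neg hall, ih]
    · have hall : ¬ ∀ y ∈ x :: t, y.1 = 0 :=
        fun hc => h (hc x List.mem_cons_self)
      simp only [List.cons_append, List.append_eq, odG, if_neg h, if_neg hall]

theorem LP_odF : LP d (odF d) := by
  constructor
  · intro w
    induction w with
    | nil => rfl
    | cons x t ih =>
      simp only [odF]
      by_cases h : x.1 + 1 = d <;> simp [h, ih]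
  · intro v w h
    obtain ⟨t, rfl⟩ := h
    rw [odF_append]
    exact ⟨_, rfl⟩

theorem LP_odG : LP d (odG d) := by
  constructor
  · intro w
    induction w with
    | nil => rfl
    | cons x t ih =>
      simp only [odG]
      by_cases h : x.1 = 0 <;> simp [h, ih]
  · intro v w h
    obtain ⟨t, rfl⟩ := h
    rw [odG_append]
    exact ⟨_, rfl⟩

/-- The standard odometer as a permutation of the vertices. -/
def odPerm (d : ℕ) : Equiv.Perm (Vertex d) where
  toFun := odF d
  invFun := odG d
  left_inv := odG_odF
  right_inv := odF_odG

/-- The standard odometer `ω ∈ Aut T_d` (adds one to a `d`-adic digit string,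
with carrying). -/
def od (d : ℕ) : AutT d :=
  ⟨odPerm d, ⟨LP_odF, LP_odG⟩⟩

/-- The standard `d`-cycle `σ = (0 1 … d-1)` on the first level. -/
def sigmaFin (d : ℕ) : Equiv.Perm (Fin d) where
  toFun := succFin
  invFun := predFin
  left_inv := predFin_succFin
  right_inv := succFin_predFin

end TreeDyn

namespace TreeDyn

open AutT

/-! ### Auxiliary machinery: base-`d` digit coding of levels -/

section Digits

variable {d : ℕ}

theorem mod_mul_key {a : ℕ} (n b : ℕ) :
    n % (a * b) = n % a + a * (n / a % b) := by
  conv_lhs => rw [← Nat.div_add_mod (n % (a * b)) a]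
  rw [Nat.mod_mul_right_div_self, Nat.mod_mod_of_dvd n (dvd_mul_right a b)]
  omega

/-- First `m` base-`d` digits of `n`, least significant first. -/
def dig (d : ℕ) (hd : 0 < d) : ℕ → ℕ → Vertex d
  | 0, _ => []
  | m + 1, n => ⟨n % d, Nat.mod_lt n hd⟩ :: dig d hd m (n / d)

/-- The number encoded by a word, least significant digit first. -/
def num (d : ℕ) : Vertex d → ℕ
  | [] => 0
  | x :: w => x.1 + d * num d w

theorem length_dig (hd : 0 < d) (m n : ℕ) : (dig d hd m n).length = m := by
  induction m generalizing n with
  | zero => rfl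
  | succ m ih => simp [dig, ih]

theorem num_lt (w : Vertex d) : num d w < d ^ w.length := by
  induction w with
  | nil => simp [num]
  | cons x w ih =>
    have hx := x.2
    simp only [num, List.length_cons, pow_succ]
    calc x.1 + d * num d w < d + d * num d w := by omega
    _ = d * (num d w + 1) := by ring
    _ ≤ d * d ^ w.length := Nat.mul_le_mul_left d ih
    _ = d ^ w.length * d := by ring

theorem num_dig (hd : 0 < d) (m n : ℕ) : num d (dig d hd m n) = n % d ^ m := by
  induction m generalizing n with
  | zero => simp [dig, num, Nat.mod_one]
  | succ m ih =>
    simp only [dig, num, ih]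
    rw [pow_succ', mod_mul_key]

theorem dig_num (hd : 0 < d) (w : Vertex d) : dig d hd w.length (num d w) = w := by
  induction w with
  | nil => rfl
  | cons x w ih =>
    have h1 : (x.1 + d * num d w) % d = x.1 := by
      rw [Nat.add_mul_mod_self_left, Nat.mod_eq_of_lt x.2]
    have h2 : (x.1 + d * num d w) / d = num d w := by
      rw [Nat.add_mul_div_left _ _ hd, Nat.div_eq_of_lt x.2, Nat.zero_add]
    simp only [num, dig, List.length_cons, List.cons.injEq, Fin.ext_iff, h1, h2, ih]

theorem num_odF (hd : 0 < d) (w : Vertex d) :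
    num d (odF d w) = (num d w + 1) % d ^ w.length := by
  induction w with
  | nil => simp [odF, num, Nat.mod_one]
  | cons x u ih =>
    by_cases h : x.1 + 1 = d
    · have hs : (succFin x).1 = 0 := by
        show (x.1 + 1) % d = 0
        rw [h, Nat.mod_self]
      simp only [odF, if_pos h, num, hs, List.length_cons, ih]
      have h2 : x.1 + d * num d u + 1 = d * (num d u + 1) := by
        rw [Nat.mul_add, Nat.mul_one]; omega
      rw [h2, pow_succ', Nat.mul_mod_mul_left, Nat.zero_add]
    · have hs : (succFin x).1 = x.1 + 1 := by
        show (x.1 + 1) % d = x.1 + 1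
        exact Nat.mod_eq_of_lt (by have := x.2; omega)
      have hlt : x.1 + d * num d u + 1 < d ^ (u.length + 1) := by
        have h1 : num d u < d ^ u.length := num_lt u
        have hx := x.2
        have h3 : d * (num d u + 1) ≤ d * d ^ u.length := Nat.mul_le_mul_left d h1
        have h4 : d * d ^ u.length = d ^ (u.length + 1) := (pow_succ' d u.length).symm
        rw [Nat.mul_add, Nat.mul_one] at h3
        omega
      simp only [odF, if_neg h, num, hs, List.length_cons]
      rw [Nat.mod_eq_of_lt hlt]
      omega

end Digits

/-! ### The action of `Aut T_d` on level `m`, coded on `ZMod (d ^ m)` -/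

section LevelHom

open AutT

variable {d : ℕ}

theorem val_natCast_num (hd : 0 < d) {m : ℕ} {w : Vertex d} (hw : w.length = m) :
    ((num d w : ZMod (d ^ m))).val = num d w := by
  rw [ZMod.val_natCast]
  exact Nat.mod_eq_of_lt (hw ▸ num_lt w)

theorem dig_val_natCast (hd : 0 < d) {m : ℕ} {w : Vertex d} (hw : w.length = m) :
    dig d hd m ((num d w : ZMod (d ^ m))).val = w := by
  rw [val_natCast_num hd hw, ← hw, dig_num hd w]

theorem cast_num_dig (hd : 0 < d) (m : ℕ) (t : ZMod (d ^ m)) :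
    ((num d (dig d hd m t.val) : ℕ) : ZMod (d ^ m)) = t := by
  haveI : NeZero (d ^ m) := ⟨(pow_pos hd m).ne'⟩
  rw [num_dig, ZMod.natCast_mod]
  exact ZMod.natCast_rightInverse t

/-- The permutation of `ZMod (d ^ m)` induced by the action of a tree automorphism
on the `m`-th level, coded by base-`d` digits. -/
def levPerm (d m : ℕ) (hd : 0 < d) (g : AutT d) : Equiv.Perm (ZMod (d ^ m)) where
  toFun t := (num d (g.toPerm (dig d hd m t.val)) : ZMod (d ^ m))
  invFun t := (num d (g⁻¹.toPerm (dig d hd m t.val)) : ZMod (d ^ m))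
  left_inv := by
    intro t
    dsimp only
    have hlen : (g.toPerm (dig d hd m t.val)).length = m := by
      rw [length_apply, length_dig]
    rw [dig_val_natCast hd hlen, toPerm_inv, Equiv.Perm.inv_def, Equiv.symm_apply_apply]
    exact cast_num_dig hd m t
  right_inv := by
    intro t
    dsimp only
    have hlen : (g⁻¹.toPerm (dig d hd m t.val)).length = m := by
      rw [length_apply, length_dig]
    rw [dig_val_natCast hd hlen, toPerm_inv, Equiv.Perm.inv_def, Equiv.apply_symm_apply]
    exact cast_num_dig hd m t

theorem levPerm_apply (d m : ℕ) (hd : 0 < d) (g : AutT d) (t : ZMod (d ^ m)) :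
    levPerm d m hd g t = (num d (g.toPerm (dig d hd m t.val)) : ZMod (d ^ m)) := rfl

/-- The action on level `m` as a group homomorphism `Aut T_d →* Perm (ZMod (d ^ m))`. -/
def levHom (d m : ℕ) (hd : 0 < d) : AutT d →* Equiv.Perm (ZMod (d ^ m)) where
  toFun g := levPerm d m hd g
  map_one' := by
    ext t
    show ((num d ((1 : AutT d).toPerm (dig d hd m t.val)) : ℕ) : ZMod (d ^ m)) = t
    rw [toPerm_one]
    exact cast_num_dig hd m t
  map_mul' g h := by
    ext t
    show ((num d ((g * h).toPerm (dig d hd m t.val)) : ℕ) : ZMod (d ^ m))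
      = levPerm d m hd g (levPerm d m hd h t)
    have hlen : (h.toPerm (dig d hd m t.val)).length = m := by
      rw [length_apply, length_dig]
    rw [levPerm_apply, levPerm_apply, dig_val_natCast hd hlen, toPerm_mul,
      Equiv.Perm.mul_apply]

theorem levHom_eq_one_iff (hd : 0 < d) {m : ℕ} {g : AutT d} :
    levHom d m hd g = 1 ↔ ∀ w : Vertex d, w.length = m → g.toPerm w = w := by
  constructor
  · intro h w hw
    have h1 : levPerm d m hd g ((num d w : ZMod (d ^ m))) = (num d w : ZMod (d ^ m)) := by
      rw [show levPerm d m hd g = levHom d m hd g from rfl, h]; rfl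
    rw [levPerm_apply, dig_val_natCast hd hw] at h1
    have hlen : (g.toPerm w).length = m := by rw [length_apply, hw]
    have h2 : num d (g.toPerm w) = num d w := by
      have := congrArg ZMod.val h1
      rwa [val_natCast_num hd hlen, val_natCast_num hd hw] at this
    calc g.toPerm w = dig d hd m (num d (g.toPerm w)) := by
          rw [← hlen]; exact (dig_num hd _).symm
    _ = dig d hd m (num d w) := by rw [h2]
    _ = w := by rw [← hw]; exact dig_num hd w
  · intro h
    ext t
    show ((num d (g.toPerm (dig d hd m t.val)) : ℕ) : ZMod (d ^ m)) = t
    rw [h _ (length_dig hd m t.val)]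
    exact cast_num_dig hd m t

theorem levHom_od (hd : 0 < d) (m : ℕ) (t : ZMod (d ^ m)) :
    levHom d m hd (od d) t = t + 1 := by
  haveI : NeZero (d ^ m) := ⟨(pow_pos hd m).ne'⟩
  show ((num d ((od d).toPerm (dig d hd m t.val)) : ℕ) : ZMod (d ^ m)) = t + 1
  have hod : (od d).toPerm (dig d hd m t.val) = odF d (dig d hd m t.val) := rfl
  rw [hod, num_odF hd, length_dig, num_dig, ZMod.natCast_mod]
  push_cast
  rw [ZMod.natCast_mod, ZMod.natCast_val, ZMod.cast_id]

theorem levHom_od_pow (hd : 0 < d) (m j : ℕ) (t : ZMod (d ^ m)) :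
    ((levHom d m hd (od d)) ^ j) t = t + (j : ZMod (d ^ m)) := by
  induction j with
  | zero => simp
  | succ j ih =>
    rw [pow_succ', Equiv.Perm.mul_apply, levHom_od, ih]
    push_cast
    ring

theorem levHom_od_pow_eq_one (hd : 0 < d) (m : ℕ) :
    (levHom d m hd (od d)) ^ (d ^ m) = 1 := by
  ext t
  rw [levHom_od_pow hd m]
  simp [ZMod.natCast_self]

end LevelHom

/-! ### Openness facts -/

section Openness

open AutT

variable {d : ℕ}

theorem fix_of_le_level (hd : 0 < d) {m : ℕ} {g : AutT d}
    (h : ∀ w : Vertex d, w.length = m → g.toPerm w = w) {v : Vertex d}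
    (hv : v.length ≤ m) : g.toPerm v = v := by
  set r : Vertex d := List.replicate (m - v.length) ⟨0, hd⟩ with hr
  have hw : (v ++ r).length = m := by
    simp [hr, List.length_replicate]
    omega
  have := take_apply g v r
  rw [h _ hw] at this
  rw [← this, List.take_left]

theorem isOpen_levHom_ker (hd : 0 < d) (m : ℕ) :
    IsOpen {g : AutT d | levHom d m hd g = 1} := by
  haveI : NeZero (d ^ m) := ⟨(pow_pos hd m).ne'⟩
  have hset : {g : AutT d | levHom d m hd g = 1} =
      ⋂ t : ZMod (d ^ m),
        (fun g : AutT d => g.toPerm (dig d hd m (ZMod.val t))) ⁻¹'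
          {dig d hd m (ZMod.val t)} := by
    ext g
    simp only [Set.mem_iInter, Set.mem_preimage, Set.mem_singleton_iff, Set.mem_setOf_eq]
    constructor
    · intro h t
      exact (levHom_eq_one_iff hd).mp h _ (length_dig hd m t.val)
    · intro h
      refine (levHom_eq_one_iff hd).mpr fun w hw => ?_
      have := h ((num d w : ZMod (d ^ m)))
      rwa [dig_val_natCast hd hw] at this
  rw [hset]
  exact isOpen_iInter_of_finite fun t =>
    (isOpen_discrete _).preimage (continuous_ev _)

theorem exists_level_of_isOpen (hd : 0 < d) {G : Subgroup (AutT d)}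
    {N : Subgroup ↥G} (hN : IsOpen (N : Set ↥G)) :
    ∃ m : ℕ, ∀ x : ↥G, (∀ w : Vertex d, w.length = m → (x : AutT d).toPerm w = w) →
      x ∈ N := by
  rw [isOpen_induced_iff] at hN
  obtain ⟨U, hU, hUN⟩ := hN
  rw [isOpen_induced_iff] at hU
  obtain ⟨V, hV, hVU⟩ := hU
  have h1V : (fun g : AutT d => (g.toPerm : Vertex d → Vertex d)) (1 : AutT d) ∈ V := by
    have h1U : (1 : AutT d) ∈ U := by
      have : ((1 : ↥G) : AutT d) ∈ U := by
        rw [← Set.mem_preimage, hUN]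
        exact N.one_mem
      simpa using this
    rw [← hVU] at h1U
    exact h1U
  rw [isOpen_pi_iff] at hV
  obtain ⟨I, u, hu, hIV⟩ := hV _ h1V
  refine ⟨I.sup List.length, fun x hx => ?_⟩
  have hmem : (fun g : AutT d => (g.toPerm : Vertex d → Vertex d)) (x : AutT d) ∈ V := by
    apply hIV
    rw [Set.mem_pi]
    intro i hi
    have hfix : (x : AutT d).toPerm i = i :=
      fix_of_le_level hd hx (Finset.le_sup (f := List.length) (Finset.mem_coe.mp hi))
    show (x : AutT d).toPerm i ∈ u i
    rw [hfix]
    simpa [toPerm_one] using (hu i (Finset.mem_coe.mp hi)).2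
  have : (x : AutT d) ∈ U := by rw [← hVU]; exact hmem
  rw [← Set.mem_preimage, hUN] at this
  exact this

end Openness

/-! ### Group theory: nilpotent groups -/

theorem commute_of_prime_pow_orders {Q : Type*} [Group Q] [Finite Q]
    [hQ : Group.IsNilpotent Q] {q r : ℕ} (hq : q.Prime) (hr : r.Prime) (hqr : q ≠ r)
    {x y : Q} {a b : ℕ} (hx : x ^ q ^ a = 1) (hy : y ^ r ^ b = 1) :
    Commute x y := by
  haveI := Fact.mk hq; haveI := Fact.mk hr
  have hxP : IsPGroup q (Subgroup.zpowers x) := by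
    rintro ⟨z, n, rfl⟩
    refine ⟨a, ?_⟩
    ext
    push_cast
    rw [← zpow_natCast, ← zpow_mul, mul_comm, zpow_mul, zpow_natCast, hx, one_zpow]
  have hyP : IsPGroup r (Subgroup.zpowers y) := by
    rintro ⟨z, n, rfl⟩
    refine ⟨b, ?_⟩
    ext
    push_cast
    rw [← zpow_natCast, ← zpow_mul, mul_comm, zpow_mul, zpow_natCast, hy, one_zpow]
  obtain ⟨P, hP⟩ := hxP.exists_le_sylow
  obtain ⟨R, hR⟩ := hyP.exists_le_sylow
  have hnc := normalizerCondition_of_isNilpotent (G := Q)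
  have hPn : (P : Subgroup Q).Normal := Sylow.normal_of_normalizerCondition hnc P
  have hRn : (R : Subgroup Q).Normal := Sylow.normal_of_normalizerCondition hnc R
  have hdisj : Disjoint (P : Subgroup Q) (R : Subgroup Q) :=
    IsPGroup.disjoint_of_ne q r hqr _ _ P.isPGroup' R.isPGroup'
  exact Subgroup.commute_of_normal_of_disjoint _ _ hPn hRn hdisj x y
    (hP (Subgroup.mem_zpowers x)) (hR (Subgroup.mem_zpowers y))

theorem perm_pow_fix {X : Type*} (σ : Equiv.Perm X) {x : X} (h : σ x = x) (n : ℕ) :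
    (σ ^ n) x = x := by
  induction n with
  | zero => rfl
  | succ n ih => rw [pow_succ, Equiv.Perm.mul_apply, h, ih]

section Supp

open AutT

variable {d : ℕ}

theorem levHom_supp (hd : 0 < d) {m : ℕ} {g : AutT d}
    (hfix : ∀ x : Fin d, g.toPerm [x] = [x])
    {x₀ : Fin d} (hother : ∀ x : Fin d, x ≠ x₀ → AutT.sec g [x] = 1)
    {s : ZMod (d ^ m)} (hs : levHom d m hd g s ≠ s) : s.val % d = x₀.1 := by
  haveI : NeZero (d ^ m) := ⟨(pow_pos hd m).ne'⟩
  have hwl : (dig d hd m s.val).length = m := length_dig hd m s.val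
  have hnum : num d (dig d hd m s.val) = s.val := by
    rw [num_dig]
    exact Nat.mod_eq_of_lt s.val_lt
  have hgw : g.toPerm (dig d hd m s.val) ≠ dig d hd m s.val := by
    intro hE
    apply hs
    show ((num d (g.toPerm (dig d hd m s.val)) : ℕ) : ZMod (d ^ m)) = s
    rw [hE]
    exact cast_num_dig hd m s
  rcases hE : dig d hd m s.val with _ | ⟨x, u⟩
  · rw [hE] at hgw
    have : g.toPerm ([] : Vertex d) = [] :=
      List.length_eq_zero_iff.mp (by rw [length_apply]; rfl)
    exact absurd this hgw
  · have hx : x = x₀ := by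
      by_contra hxne
      apply hgw
      rw [hE]
      have h1 : g.toPerm ([x] ++ u) = g.toPerm [x] ++ secFun g [x] u := secFun_spec g [x] u
      have h2 : secFun g [x] u = u := by
        have h3 : secFun g [x] u = (AutT.sec g [x]).toPerm u := rfl
        rw [h3, hother x hxne, toPerm_one]
        rfl
      rw [hfix x, h2] at h1
      simpa using h1
    rw [← hnum, hE]
    show (x.1 + d * num d u) % d = x₀.1
    rw [Nat.add_mul_mod_self_left, Nat.mod_eq_of_lt x.2, hx]

end Supp


/-- **Pronilpotent pfIMG-style groups with a one-coordinate element are pro-`p`.**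
Let `d ≥ 2` and let `G` be a closed subgroup of `Aut T_d` containing the standard
odometer.  Suppose `G` is pronilpotent.  If `G` contains a nontrivial element `g` fixing
the first level whose first-level sections are trivial except at exactly one letter
(`g = (1,…,1,h,1,…,1)` with `h ≠ 1` in wreath coordinates), then `d` is a power of some
prime `p` and `G` is pro-`p`. -/
theorem pronilpotent_implies_proP (d : ℕ) (hd : 2 ≤ d)
    (G : Subgroup (AutT d)) (hGclosed : IsClosed (G : Set (AutT d)))
    (hω : od d ∈ G) (hnilp : Pronilpotent G)
    (g : AutT d) (hgG : g ∈ G) (hg1 : g ≠ 1)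
    (hfix : ∀ x : Fin d, g.toPerm [x] = [x])
    (x₀ : Fin d) (hx₀ : AutT.sec g [x₀] ≠ 1)
    (hother : ∀ x : Fin d, x ≠ x₀ → AutT.sec g [x] = 1) :
    ∃ p : ℕ, p.Prime ∧ (∃ n : ℕ, d = p ^ n) ∧ IsProP p G := by
  have hd0 : 0 < d := by omega
  -- Nilpotency of every level quotient of `G`
  have hQnil : ∀ m : ℕ, Group.IsNilpotent ((levHom d m hd0).comp G.subtype).range := by
    intro m
    haveI : NeZero (d ^ m) := ⟨(pow_pos hd0 m).ne'⟩
    have hkerset : ((((levHom d m hd0).comp G.subtype).ker : Subgroup ↥G) : Set ↥G)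
        = Subtype.val ⁻¹' {g' : AutT d | levHom d m hd0 g' = 1} := by
      ext y
      simp only [SetLike.mem_coe, MonoidHom.mem_ker, MonoidHom.comp_apply,
        Set.mem_preimage, Set.mem_setOf_eq]
      exact Iff.rfl
    have hker : IsOpen ((((levHom d m hd0).comp G.subtype).ker : Subgroup ↥G) : Set ↥G) := by
      rw [hkerset]
      exact (isOpen_levHom_ker hd0 m).preimage continuous_subtype_val
    have hnq := hnilp ((levHom d m hd0).comp G.subtype).ker hker
    exact nilpotent_of_mulEquiv
      (QuotientGroup.quotientKerEquivRange ((levHom d m hd0).comp G.subtype))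
  -- a vertex moved by `g`
  obtain ⟨w₀, hw₀⟩ : ∃ w : Vertex d, g.toPerm w ≠ w := by
    by_contra hcon
    push_neg at hcon
    exact hg1 (Subtype.ext (Equiv.ext hcon))
  have hw0ne : w₀ ≠ [] := by
    rintro rfl
    exact hw₀ (List.length_eq_zero_iff.mp (by rw [length_apply]; rfl))
  have hm₀pos : 0 < w₀.length := List.length_pos_iff.mpr hw0ne
  set m₀ := w₀.length with hm₀def
  haveI hNZ0 : NeZero (d ^ m₀) := ⟨(pow_pos hd0 m₀).ne'⟩
  set f₀ : ↥G →* Equiv.Perm (ZMod (d ^ m₀)) := (levHom d m₀ hd0).comp G.subtype with hf₀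
  haveI hQ0nil : Group.IsNilpotent f₀.range := hQnil m₀
  set bQ : ↥f₀.range := ⟨f₀ ⟨g, hgG⟩, ⟨⟨g, hgG⟩, rfl⟩⟩ with hbQdef
  have hbQcoe : (bQ : Equiv.Perm (ZMod (d ^ m₀))) = levHom d m₀ hd0 g := rfl
  have hbQne : bQ ≠ 1 := by
    intro hE
    have h1 : levHom d m₀ hd0 g = 1 := by
      rw [← hbQcoe, hE]; rfl
    exact hw₀ ((levHom_eq_one_iff hd0).mp h1 w₀ rfl)
  set k := orderOf bQ with hkdef
  have hkpos : 0 < k := orderOf_pos bQ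
  have hk1 : k ≠ 1 := fun hE => hbQne (orderOf_eq_one_iff.mp hE)
  set r := k.minFac with hrdef
  have hr : r.Prime := Nat.minFac_prime hk1
  have hrdvd : r ∣ k := Nat.minFac_dvd k
  set aQ : ↥f₀.range := ⟨levHom d m₀ hd0 (od d), ⟨⟨od d, hω⟩, rfl⟩⟩ with haQdef
  have hb'pow : (bQ ^ (k / r)) ^ r = 1 := by
    rw [← pow_mul, Nat.div_mul_cancel hrdvd]
    exact pow_orderOf_eq_one bQ
  have hb'ne : bQ ^ (k / r) ≠ 1 := by
    intro hE
    have h1 : k ∣ k / r := orderOf_dvd_of_pow_eq_one hE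
    have h2 : k / r < k := Nat.div_lt_self hkpos hr.one_lt
    have h3 : 0 < k / r := Nat.div_pos (Nat.le_of_dvd hkpos hrdvd) hr.pos
    have h4 := Nat.le_of_dvd h3 h1
    omega
  -- every prime dividing `d` equals `r`
  have hqr : ∀ q : ℕ, q.Prime → q ∣ d → q = r := by
    intro q hq hqd
    by_contra hne
    have hαpow : (aQ ^ ((d / q ^ d.factorization q) ^ m₀)) ^ q ^ (d.factorization q * m₀)
        = 1 := by
      rw [← pow_mul]
      have hexp : (d / q ^ d.factorization q) ^ m₀ * q ^ (d.factorization q * m₀)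
          = d ^ m₀ := by
        rw [pow_mul, ← mul_pow]
        congr 1
        rw [mul_comm]
        exact Nat.ordProj_mul_ordCompl_eq_self d q
      rw [hexp]
      apply Subtype.ext
      rw [SubgroupClass.coe_pow]
      show (levHom d m₀ hd0 (od d)) ^ (d ^ m₀) = 1
      exact levHom_od_pow_eq_one hd0 m₀
    have hcomm : Commute (bQ ^ (k / r)) (aQ ^ ((d / q ^ d.factorization q) ^ m₀)) := by
      have h1 : (bQ ^ (k / r)) ^ r ^ 1 = 1 := by rw [pow_one]; exact hb'pow
      exact commute_of_prime_pow_orders hr hq (fun h => hne h.symm) h1 hαpow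
    have hb'coe : ((bQ ^ (k / r) : ↥f₀.range) : Equiv.Perm (ZMod (d ^ m₀)))
        = (levHom d m₀ hd0 g) ^ (k / r) := by
      rw [SubgroupClass.coe_pow, hbQcoe]
    have hαcoe : ∀ s : ZMod (d ^ m₀),
        ((aQ ^ ((d / q ^ d.factorization q) ^ m₀) : ↥f₀.range) :
          Equiv.Perm (ZMod (d ^ m₀))) s = s + ((d / q ^ d.factorization q) ^ m₀ : ℕ) := by
      intro s
      rw [SubgroupClass.coe_pow]
      exact levHom_od_pow hd0 m₀ _ s
    obtain ⟨t, ht⟩ : ∃ t, ((bQ ^ (k / r) : ↥f₀.range) :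
        Equiv.Perm (ZMod (d ^ m₀))) t ≠ t := by
      by_contra hcon
      push_neg at hcon
      exact hb'ne (Subtype.ext (Equiv.ext hcon))
    have hsupp : ∀ s : ZMod (d ^ m₀),
        ((bQ ^ (k / r) : ↥f₀.range) : Equiv.Perm (ZMod (d ^ m₀))) s ≠ s →
          s.val % d = x₀.1 := by
      intro s hsne
      apply levHom_supp hd0 hfix hother
      intro hfixs
      apply hsne
      rw [hb'coe]
      exact perm_pow_fix _ hfixs _
    have e1 := hsupp t ht
    have ht2 : ((bQ ^ (k / r) : ↥f₀.range) : Equiv.Perm (ZMod (d ^ m₀)))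
        (t + ((d / q ^ d.factorization q) ^ m₀ : ℕ))
          ≠ t + ((d / q ^ d.factorization q) ^ m₀ : ℕ) := by
      intro hEq
      apply ht
      have hc' : ((bQ ^ (k / r) : ↥f₀.range) : Equiv.Perm (ZMod (d ^ m₀)))
          * ((aQ ^ ((d / q ^ d.factorization q) ^ m₀) : ↥f₀.range) : Equiv.Perm (ZMod (d ^ m₀)))
          = ((aQ ^ ((d / q ^ d.factorization q) ^ m₀) : ↥f₀.range) : Equiv.Perm (ZMod (d ^ m₀)))
          * ((bQ ^ (k / r) : ↥f₀.range) : Equiv.Perm (ZMod (d ^ m₀))) := by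
        have h0 := congrArg Subtype.val hcomm
        rwa [Subgroup.coe_mul, Subgroup.coe_mul] at h0
      have h1 := Equiv.ext_iff.mp hc' t
      rw [Equiv.Perm.mul_apply, Equiv.Perm.mul_apply, hαcoe, hαcoe, hEq] at h1
      exact (add_right_cancel h1).symm
    have e2 := hsupp _ ht2
    have hdvd : d ∣ d ^ m₀ := dvd_pow_self d hm₀pos.ne'
    have hval : (t + (((d / q ^ d.factorization q) ^ m₀ : ℕ) : ZMod (d ^ m₀))).val % d
        = (t.val + (d / q ^ d.factorization q) ^ m₀) % d := by
      rw [ZMod.val_add, Nat.mod_mod_of_dvd _ hdvd, ZMod.val_natCast, Nat.add_mod,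
        Nat.mod_mod_of_dvd _ hdvd, ← Nat.add_mod]
    rw [hval] at e2
    have hdveq : d ∣ (d / q ^ d.factorization q) ^ m₀ := by
      have hmodeq : t.val + (d / q ^ d.factorization q) ^ m₀ ≡ t.val + 0 [MOD d] := by
        show _ % d = _ % d
        rw [Nat.add_zero, e2, e1]
      exact (Nat.modEq_zero_iff_dvd).mp (Nat.ModEq.add_left_cancel' t.val hmodeq)
    have h5 : q ∣ (d / q ^ d.factorization q) ^ m₀ := dvd_trans hqd hdveq
    have h6 : q ∣ d / q ^ d.factorization q := hq.dvd_of_dvd_pow h5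
    exact Nat.not_dvd_ordCompl hq (by omega) h6
  have hdpow : ∃ n : ℕ, d = r ^ n :=
    ⟨d.primeFactorsList.length, Nat.eq_prime_pow_of_unique_prime_dvd (by omega)
      (fun {q} hq hqd => hqr q hq hqd)⟩
  refine ⟨r, hr, hdpow, ?_⟩
  -- `G` is pro-`r`
  intro N _instN hNopen
  obtain ⟨m, hm⟩ := exists_level_of_isOpen hd0 hNopen
  intro y
  obtain ⟨x, rfl⟩ := QuotientGroup.mk_surjective y
  haveI : NeZero (d ^ m) := ⟨(pow_pos hd0 m).ne'⟩
  haveI hQmnil : Group.IsNilpotent ((levHom d m hd0).comp G.subtype).range := hQnil m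
  set fm : ↥G →* Equiv.Perm (ZMod (d ^ m)) := (levHom d m hd0).comp G.subtype with hfm
  set yQ : ↥fm.range := ⟨fm x, ⟨x, rfl⟩⟩ with hyQdef
  set aQm : ↥fm.range := ⟨levHom d m hd0 (od d), ⟨⟨od d, hω⟩, rfl⟩⟩ with haQmdef
  obtain ⟨n, hn⟩ := hdpow
  have hapow : aQm ^ r ^ (n * m) = 1 := by
    apply Subtype.ext
    rw [SubgroupClass.coe_pow]
    show (levHom d m hd0 (od d)) ^ (r ^ (n * m)) = 1
    rw [pow_mul, ← hn]
    exact levHom_od_pow_eq_one hd0 m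
  have hkey : ∀ s : ℕ, s.Prime → s ∣ orderOf yQ → s = r := by
    intro s hs hsd
    by_contra hsr
    have hk'pos : 0 < orderOf yQ := orderOf_pos yQ
    have hy'pow : (yQ ^ (orderOf yQ / s)) ^ s ^ 1 = 1 := by
      rw [pow_one, ← pow_mul, Nat.div_mul_cancel hsd]
      exact pow_orderOf_eq_one yQ
    have hcomm : Commute (yQ ^ (orderOf yQ / s)) aQm :=
      commute_of_prime_pow_orders hs hr hsr hy'pow hapow
    have haap : ∀ v : ZMod (d ^ m), ((aQm : ↥fm.range) : Equiv.Perm (ZMod (d ^ m))) v = v + 1 :=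
      fun v => levHom_od hd0 m v
    have hy'c : ∀ u : ZMod (d ^ m),
        ((yQ ^ (orderOf yQ / s) : ↥fm.range) : Equiv.Perm (ZMod (d ^ m))) (u + 1)
          = ((yQ ^ (orderOf yQ / s) : ↥fm.range) : Equiv.Perm (ZMod (d ^ m))) u + 1 := by
      intro u
      have hc' : ((yQ ^ (orderOf yQ / s) : ↥fm.range) : Equiv.Perm (ZMod (d ^ m)))
          * ((aQm : ↥fm.range) : Equiv.Perm (ZMod (d ^ m)))
          = ((aQm : ↥fm.range) : Equiv.Perm (ZMod (d ^ m)))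
          * ((yQ ^ (orderOf yQ / s) : ↥fm.range) : Equiv.Perm (ZMod (d ^ m))) := by
        have h0 := congrArg Subtype.val hcomm
        rwa [Subgroup.coe_mul, Subgroup.coe_mul] at h0
      have h1 := Equiv.ext_iff.mp hc' u
      rw [Equiv.Perm.mul_apply, Equiv.Perm.mul_apply, haap, haap] at h1
      exact h1
    have htrans : ∀ u : ZMod (d ^ m),
        ((yQ ^ (orderOf yQ / s) : ↥fm.range) : Equiv.Perm (ZMod (d ^ m))) u
          = ((yQ ^ (orderOf yQ / s) : ↥fm.range) : Equiv.Perm (ZMod (d ^ m))) 0 + u := by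
      have hnat : ∀ j : ℕ,
          ((yQ ^ (orderOf yQ / s) : ↥fm.range) : Equiv.Perm (ZMod (d ^ m))) (j : ZMod (d ^ m))
            = ((yQ ^ (orderOf yQ / s) : ↥fm.range) : Equiv.Perm (ZMod (d ^ m))) 0 + j := by
        intro j
        induction j with
        | zero => simp
        | succ j ih =>
          rw [Nat.cast_succ, hy'c, ih, add_assoc]
      intro u
      have h2 := hnat u.val
      rwa [ZMod.natCast_val, ZMod.cast_id] at h2
    have hy'D : (yQ ^ (orderOf yQ / s)) ^ (d ^ m) = 1 := by
      apply Subtype.ext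
      rw [SubgroupClass.coe_pow]
      have hyeq : ((yQ ^ (orderOf yQ / s) : ↥fm.range) : Equiv.Perm (ZMod (d ^ m)))
          = (levHom d m hd0 (od d))
            ^ (((yQ ^ (orderOf yQ / s) : ↥fm.range) : Equiv.Perm (ZMod (d ^ m))) 0).val := by
        ext u
        rw [levHom_od_pow, htrans u, ZMod.natCast_val, ZMod.cast_id, add_comm]
      rw [hyeq, ← pow_mul, mul_comm, pow_mul, levHom_od_pow_eq_one hd0 m, one_pow]
      rfl
    have hords : orderOf (yQ ^ (orderOf yQ / s)) = s := by
      rw [orderOf_pow, Nat.gcd_eq_right (Nat.div_dvd_of_dvd hsd)]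
      exact Nat.div_div_self hsd hk'pos.ne'
    have hsdvd : s ∣ d ^ m := by
      rw [← hords]
      exact orderOf_dvd_of_pow_eq_one hy'D
    have h7 : s ∣ r :=
      hs.dvd_of_dvd_pow (show s ∣ r ^ (n * m) by rwa [hn, ← pow_mul] at hsdvd)
    exact hsr ((Nat.prime_dvd_prime_iff_eq hs hr).mp h7)
  have hyord : ∃ K, yQ ^ r ^ K = 1 := by
    refine ⟨(orderOf yQ).primeFactorsList.length, ?_⟩
    rw [← Nat.eq_prime_pow_of_unique_prime_dvd (orderOf_pos yQ).ne'
      (fun {s} hs hsd => hkey s hs hsd)]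
    exact pow_orderOf_eq_one yQ
  obtain ⟨K, hK⟩ := hyord
  refine ⟨K, ?_⟩
  rw [← QuotientGroup.mk_pow, QuotientGroup.eq_one_iff]
  apply hm
  intro w hw
  have hfx : levHom d m hd0 ((x ^ r ^ K : ↥G) : AutT d) = 1 := by
    have h1 := congrArg Subtype.val hK
    rw [SubgroupClass.coe_pow] at h1
    have h2 : fm (x ^ r ^ K) = 1 := by rw [map_pow]; exact h1
    exact h2
  exact (levHom_eq_one_iff hd0).mp hfx w hw


end TreeDyn
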